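/- There are no integers x, y ≥ 2 and j ≥ 2 satisfying 1/x + 1/y = (6j+6)/(10j+9). -/

import Mathlib

/-- Case 4a of Lemma 4.40: `1/x + 1/y = (6j+6)/(10j+9)` has no solution with
`x, y ≥ 2` and `j ≥ 2`. -/
theorem stmt14 : ¬ ∃ (x y j : ℕ), 2 ≤ x ∧ 2 ≤ y ∧ 2 ≤ j ∧
    (1 : ℚ) / x + 1 / y = (6 * (j : ℚ) + 6) / (10 * j + 9) := by
  rintro ⟨x, y, j, hx, hy, hj, heq⟩
  have hx0 : (x:ℚ) ≠ 0 := by positivity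
  have hy0 : (y:ℚ) ≠ 0 := by positivity
  have hd : (10*(j:ℚ)+9) ≠ 0 := by positivity
  field_simp at heq
  have hN : (y + x) * (10*j + 9) = (6*j + 6) * (x*y) := by exact_mod_cast (by linear_combination heq : ((y:ℚ) + x) * (10*j + 9) = (6*j + 6) * (x*y))
  have hb : 3*(x*y) < 5*(x+y) := by nlinarith [hN, hj]
  have hx9 : x ≤ 9 := by nlinarith
  have hy9 : y ≤ 9 := by nlinarith
  interval_cases x <;> interval_cases y <;> omega
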